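/- Let α > -1, β > -1, γ ∈ ℝ, and let μ be a positive Borel measure on [0,1). If μ([t,1)) (log(e/(1-t)))^{β+1-γ} ≤ C(1-t)^{α+1} for all t ∈ [0,1), then sup_{n≥1} n^{α+1} (log(n+1))^{-γ} ∫_0^1 t^n (log(e/(1-t)))^{β+1} dμ(t) < ∞. Conversely, if the supremum is finite then μ([t,1)) (log(e/(1-t)))^{β+1-γ} ≤ C(1-t)^{α+1} for all t. -/

import Mathlib

open MeasureTheory Set Filter

/-- `g` is almost decreasing on `s`. -/
def AlmostDecreasingOn (g : ℝ → ℝ) (s : Set ℝ) : Prop :=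
  ∃ C > 0, ∀ x ∈ s, ∀ y ∈ s, x < y → g y ≤ C * g x

/-- `g` is almost increasing on `s`. -/
def AlmostIncreasingOn (g : ℝ → ℝ) (s : Set ℝ) : Prop :=
  ∃ C > 0, ∀ x ∈ s, ∀ y ∈ s, x < y → g x ≤ C * g y

/-- `ν` is a normal weight on `[0,1)` with exponents `a ≤ b`. -/
def IsNormal (ν : ℝ → ℝ) (a b : ℝ) : Prop :=
  0 < a ∧ a ≤ b ∧ (∀ s ∈ Ico (0:ℝ) 1, 0 < ν s) ∧ ContinuousOn ν (Ico 0 1) ∧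
  AlmostDecreasingOn (fun s => ν s / (1 - s ^ 2) ^ a) (Ico 0 1) ∧
  AlmostIncreasingOn (fun s => ν s / (1 - s ^ 2) ^ b) (Ico 0 1)

/-- Membership in the normal-weight Bloch space `B_ν`. -/
def MemBloch (ν : ℝ → ℝ) (f : ℂ → ℂ) : Prop :=
  DifferentiableOn ℂ f (Metric.ball 0 1) ∧
  BddAbove (Set.range fun z : Metric.ball (0:ℂ) 1 => ν ‖(z : ℂ)‖ * ‖deriv f z‖)

/-- The Bloch norm `|f(0)| + sup ν(|z|)|f'(z)|`. -/
noncomputable def blochNorm (ν : ℝ → ℝ) (f : ℂ → ℂ) : ℝ :=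
  ‖f 0‖ + ⨆ z : Metric.ball (0:ℂ) 1, ν ‖(z : ℂ)‖ * ‖deriv f z‖

/-- `ω̃(t) = ∫_0^t ds/ω(s)`. -/
noncomputable def tildeW (ω : ℝ → ℝ) (t : ℝ) : ℝ := ∫ s in (0:ℝ)..t, 1 / ω s

/-- The generalized integral type Hilbert operator `I_{μ,α+1}`. -/
noncomputable def intHilbert (μ : Measure ℝ) (α : ℝ) (f : ℂ → ℂ) (z : ℂ) : ℂ :=
  ∫ t in Ico (0:ℝ) 1, f (t : ℂ) / (1 - (t : ℂ) * z) ^ ((α : ℂ) + 1) ∂μ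

/-- The sublinear generalized integral type Hilbert operator. -/
noncomputable def tildeIntHilbert (μ : Measure ℝ) (α : ℝ) (f : ℂ → ℂ) (z : ℂ) : ℂ :=
  ∫ t in Ico (0:ℝ) 1, (‖f (t : ℂ)‖ : ℂ) / (1 - (t : ℂ) * z) ^ ((α : ℂ) + 1) ∂μ

/-- Boundedness of an operator from `B_{ν₁}` to `B_{ν₂}`. -/
def IsBddOp (ν₁ ν₂ : ℝ → ℝ) (T : (ℂ → ℂ) → ℂ → ℂ) : Prop :=
  ∃ C > 0, ∀ f, MemBloch ν₁ f → MemBloch ν₂ (T f) ∧ blochNorm ν₂ (T f) ≤ C * blochNorm ν₁ f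

/-- Compactness of an operator from `B_{ν₁}` to `B_{ν₂}` (sequential characterization). -/
def IsCompactOp (ν₁ ν₂ : ℝ → ℝ) (T : (ℂ → ℂ) → ℂ → ℂ) : Prop :=
  IsBddOp ν₁ ν₂ T ∧
  ∀ (h : ℕ → ℂ → ℂ) (M : ℝ), (∀ k, MemBloch ν₁ (h k) ∧ blochNorm ν₁ (h k) ≤ M) →
    TendstoLocallyUniformlyOn (fun k z => h k z) (fun _ => 0) atTop (Metric.ball (0:ℂ) 1) →
    Tendsto (fun k => blochNorm ν₂ (T (h k))) atTop (nhds 0)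

open scoped ENNReal

noncomputable def hilbL (s : ℝ) : ℝ := Real.log (Real.exp 1 / (1 - s))

-- === from b1.lean ===
lemma hilbL_eq {s : ℝ} (h : s < 1) : hilbL s = 1 - Real.log (1 - s) := by
  unfold hilbL
  rw [Real.log_div (Real.exp_ne_zero 1) (by linarith), Real.log_exp]

lemma one_le_hilbL {s : ℝ} (h0 : 0 ≤ s) (h1 : s < 1) : 1 ≤ hilbL s := by
  rw [hilbL_eq h1]
  have : Real.log (1 - s) ≤ 0 := Real.log_nonpos (by linarith) (by linarith)
  linarith

lemma hilbL_pos {s : ℝ} (h0 : 0 ≤ s) (h1 : s < 1) : 0 < hilbL s :=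
  lt_of_lt_of_le one_pos (one_le_hilbL h0 h1)

lemma hilbL_le {s : ℝ} (h0 : 0 ≤ s) (h1 : s < 1) : hilbL s ≤ 1 / (1 - s) := by
  rw [hilbL_eq h1]
  have h2 : (0:ℝ) < 1 - s := by linarith
  have h3 : Real.log (1 / (1-s)) ≤ 1/(1-s) - 1 :=
    Real.log_le_sub_one_of_pos (by positivity)
  rw [Real.log_div one_ne_zero (ne_of_gt h2), Real.log_one] at h3
  linarith

lemma hilbL_mono {s t : ℝ} (h0 : 0 ≤ s) (hst : s ≤ t) (h1 : t < 1) : hilbL s ≤ hilbL t := by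
  rw [hilbL_eq (lt_of_le_of_lt hst h1), hilbL_eq h1]
  have := Real.log_le_log (by linarith : (0:ℝ) < 1 - t) (by linarith : 1 - t ≤ 1 - s)
  linarith

lemma measurable_hilbL : Measurable hilbL := by
  unfold hilbL
  exact Real.measurable_log.comp (measurable_const.div (measurable_const.sub measurable_id))

-- === from b2.lean ===
lemma hilb_finite (μ : Measure ℝ) (β : ℝ) (hβ : -1 < β)
    (hμ : Integrable (fun t => hilbL t ^ β / (1 - t)) (μ.restrict (Ico 0 1))) :
    μ (Ico (0:ℝ) 1) < ⊤ := by
  have hf : ∀ t ∈ Ico (0:ℝ) 1, 1 ≤ hilbL t ^ β / (1 - t) := by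
    rintro t ⟨h0, h1⟩
    have h2 : (0:ℝ) < 1 - t := by linarith
    rcases le_or_gt 0 β with hb | hb
    · have : (1:ℝ) ≤ hilbL t ^ β := Real.one_le_rpow (one_le_hilbL h0 h1) hb
      rw [le_div_iff₀ h2]
      nlinarith
    · have h3 : ((1:ℝ)/(1-t)) ^ β ≤ hilbL t ^ β :=
        Real.rpow_le_rpow_of_nonpos (hilbL_pos h0 h1) (hilbL_le h0 h1) (le_of_lt hb)
      have h4 : ((1:ℝ)/(1-t)) ^ β = (1-t) ^ (-β) := by
        rw [one_div, Real.inv_rpow h2.le, ← Real.rpow_neg h2.le]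
      have h5 : (1:ℝ) ≤ (1-t) ^ (-β) / (1-t) := by
        rw [div_eq_mul_inv, ← Real.rpow_neg_one (1-t), ← Real.rpow_add h2]
        exact Real.one_le_rpow_of_pos_of_le_one_of_nonpos h2 (by linarith) (by linarith)
      calc (1:ℝ) ≤ (1-t) ^ (-β) / (1-t) := h5
        _ = ((1:ℝ)/(1-t)) ^ β / (1-t) := by rw [h4]
        _ ≤ hilbL t ^ β / (1 - t) := by gcongr
  have hmeas : MeasurableSet {a : ℝ | 1 ≤ hilbL a ^ β / (1 - a)} := by
    apply measurableSet_le measurable_const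
    exact (measurable_hilbL.pow_const β).div (measurable_const.sub measurable_id)
  have := hμ.measure_ge_lt_top one_pos
  rw [Measure.restrict_apply hmeas] at this
  refine lt_of_le_of_lt (measure_mono ?_) this
  intro t ht
  exact ⟨hf t ht, ht⟩

-- === from b3.lean ===
lemma hilb_ptwise (δ x a : ℝ) (hx : 0 ≤ x) (ha : 0 ≤ a) :
    (1+x) ^ δ ≤ (1+a) ^ δ * (1+|x-a|) ^ |δ| := by
  have hx1 : (0:ℝ) < 1 + x := by linarith
  have ha1 : (0:ℝ) < 1 + a := by linarith
  have hb1 : (0:ℝ) < 1 + |x - a| := by have := abs_nonneg (x-a); linarith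
  rcases le_or_gt 0 δ with hd | hd
  · rw [abs_of_nonneg hd]
    have key : 1 + x ≤ (1+a) * (1+|x-a|) := by
      have h1 := le_abs_self (x - a)
      have h2 := abs_nonneg (x - a)
      nlinarith
    calc (1+x) ^ δ ≤ ((1+a)*(1+|x-a|)) ^ δ := Real.rpow_le_rpow hx1.le key hd
      _ = (1+a) ^ δ * (1+|x-a|) ^ δ := Real.mul_rpow ha1.le hb1.le
  · rw [abs_of_neg hd]
    have key : 1 + a ≤ (1+x) * (1+|x-a|) := by
      have h1 := le_abs_self (a - x)
      rw [abs_sub_comm] at h1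
      have h2 := abs_nonneg (x - a)
      nlinarith
    have k2 : (1+a) ^ (-δ) ≤ (1+x) ^ (-δ) * (1+|x-a|) ^ (-δ) := by
      rw [← Real.mul_rpow hx1.le hb1.le]
      exact Real.rpow_le_rpow ha1.le key (by linarith)
    have hu : (0:ℝ) < (1+x) ^ (-δ) := Real.rpow_pos_of_pos hx1 _
    have hv : (0:ℝ) < (1+a) ^ (-δ) := Real.rpow_pos_of_pos ha1 _
    have hw : (0:ℝ) < (1+|x-a|) ^ (-δ) := Real.rpow_pos_of_pos hb1 _
    have e1 : (1+x) ^ δ = ((1+x) ^ (-δ))⁻¹ := by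
      rw [← Real.rpow_neg hx1.le, neg_neg]
    have e2 : (1+a) ^ δ = ((1+a) ^ (-δ))⁻¹ := by
      rw [← Real.rpow_neg ha1.le, neg_neg]
    rw [e1, e2, inv_mul_eq_div, le_div_iff₀ hv, inv_mul_eq_div, div_le_iff₀ hu]
    nlinarith [k2]

lemma hilb_poly_le_exp (m ε : ℝ) (hm : 0 ≤ m) (hε : 0 < ε) :
    ∃ D : ℝ, 0 < D ∧ ∀ x : ℝ, 0 ≤ x → (1+x) ^ m ≤ D * Real.exp (ε * x) := by
  have h := tendsto_rpow_mul_exp_neg_mul_atTop_nhds_zero m ε hε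
  have h1 : ∀ᶠ y in atTop, y ^ m * Real.exp (-ε * y) < 1 :=
    h.eventually_lt_const one_pos
  obtain ⟨Y, hY⟩ := eventually_atTop.1 h1
  set Z := max 1 Y with hZ
  have hcont : ContinuousOn (fun y : ℝ => y ^ m * Real.exp (-ε * y)) (Icc 1 Z) :=
    ((Real.continuous_rpow_const hm).mul
      (Real.continuous_exp.comp (continuous_const.mul continuous_id))).continuousOn
  obtain ⟨z, _, hz⟩ := isCompact_Icc.exists_isMaxOn ⟨1, by simp [hZ, le_max_left]⟩ hcont
  set D0 := max (z ^ m * Real.exp (-ε * z)) 1 with hD0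
  have hD0pos : 0 < D0 := lt_of_lt_of_le one_pos (le_max_right _ _)
  have hbound : ∀ y : ℝ, 1 ≤ y → y ^ m * Real.exp (-ε * y) ≤ D0 := by
    intro y hy
    rcases le_or_gt y Z with hyZ | hyZ
    · exact le_trans (hz ⟨hy, hyZ⟩) (le_max_left _ _)
    · exact le_trans (hY y (le_of_lt (lt_of_le_of_lt (le_max_right 1 Y) hyZ))).le
        (le_max_right _ _)
  refine ⟨D0 * Real.exp ε, by positivity, fun x hx => ?_⟩
  have key := hbound (1+x) (by linarith)
  have e1 : Real.exp (-ε * (1+x)) = (Real.exp ε * Real.exp (ε * x))⁻¹ := by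
    rw [← Real.exp_add, ← Real.exp_neg]
    ring_nf
  rw [e1] at key
  have hp : (0:ℝ) < Real.exp ε * Real.exp (ε * x) := by positivity
  rw [mul_inv_le_iff₀ hp] at key
  calc (1+x) ^ m ≤ Real.exp ε * Real.exp (ε * x) * D0 := by rw [mul_comm (Real.exp ε * Real.exp (ε * x)) D0]; exact key
    _ = D0 * Real.exp ε * Real.exp (ε * x) := by ring

lemma hilb_log_le_rpow (m ε : ℝ) (hm : 0 ≤ m) (hε : 0 < ε) :
    ∃ D : ℝ, 0 < D ∧ ∀ v : ℝ, 0 < v →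
      (1+|Real.log v|) ^ m ≤ D * (v ^ ε + v ^ (-ε)) := by
  obtain ⟨D, hD, h⟩ := hilb_poly_le_exp m ε hm hε
  refine ⟨D, hD, fun v hv => ?_⟩
  have h1 := h |Real.log v| (abs_nonneg _)
  refine h1.trans ?_
  have h2 : Real.exp (ε * |Real.log v|) ≤ v ^ ε + v ^ (-ε) := by
    rcases le_or_gt 0 (Real.log v) with hl | hl
    · rw [abs_of_nonneg hl]
      have : Real.exp (ε * Real.log v) = v ^ ε := by
        rw [Real.rpow_def_of_pos hv, mul_comm]
      rw [this]
      have : (0:ℝ) ≤ v ^ (-ε) := (Real.rpow_pos_of_pos hv _).le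
      linarith
    · rw [abs_of_neg hl]
      have : Real.exp (ε * -Real.log v) = v ^ (-ε) := by
        rw [Real.rpow_def_of_pos hv]
        ring_nf
      rw [this]
      have : (0:ℝ) ≤ v ^ ε := (Real.rpow_pos_of_pos hv _).le
      linarith
  calc D * Real.exp (ε * |Real.log v|) ≤ D * (v ^ ε + v ^ (-ε)) := by
        exact mul_le_mul_of_nonneg_left h2 hD.le
lemma hilbG_integrable (a m : ℝ) (ha : -1 < a) (hm : 0 ≤ m) :
    IntegrableOn (fun v => Real.exp (-v) * v ^ a * (1+|Real.log v|) ^ m) (Ioi (0:ℝ)) := by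
  set ε := (a+1)/2 with hε
  have hεpos : 0 < ε := by rw [hε]; linarith
  obtain ⟨D, hD, hDb⟩ := hilb_log_le_rpow m ε hm hεpos
  have hint : IntegrableOn
      (fun v => D * (Real.exp (-v) * v ^ (a+ε) + Real.exp (-v) * v ^ (a-ε))) (Ioi (0:ℝ)) := by
    apply Integrable.const_mul
    have g1 : IntegrableOn (fun v => Real.exp (-v) * v ^ ((a+ε+1) - 1)) (Ioi (0:ℝ)) :=
      Real.GammaIntegral_convergent (by linarith)
    have g2 : IntegrableOn (fun v => Real.exp (-v) * v ^ ((a-ε+1) - 1)) (Ioi (0:ℝ)) :=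
      Real.GammaIntegral_convergent (by rw [hε]; linarith)
    change IntegrableOn _ (Ioi (0:ℝ))
    simpa [Pi.add_def] using g1.add g2
  apply Integrable.mono' hint
  · apply Measurable.aestronglyMeasurable
    exact ((measurable_neg.exp).mul (measurable_id.pow_const a)).mul
      ((measurable_const.add (Real.measurable_log.abs)).pow_const m)
  · filter_upwards [self_mem_ae_restrict (measurableSet_Ioi : MeasurableSet (Ioi (0:ℝ)))]
      with v hv
    have hv' : (0:ℝ) < v := hv
    have hnn : 0 ≤ Real.exp (-v) * v ^ a * (1+|Real.log v|) ^ m := by positivity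
    rw [Real.norm_eq_abs, abs_of_nonneg hnn]
    have := hDb v hv'
    calc Real.exp (-v) * v ^ a * (1+|Real.log v|) ^ m
        ≤ Real.exp (-v) * v ^ a * (D * (v ^ ε + v ^ (-ε))) := by
          apply mul_le_mul_of_nonneg_left this (by positivity)
      _ = D * (Real.exp (-v) * (v ^ a * v ^ ε) + Real.exp (-v) * (v ^ a * v ^ (-ε))) := by ring
      _ = D * (Real.exp (-v) * v ^ (a+ε) + Real.exp (-v) * v ^ (a-ε)) := by
          rw [← Real.rpow_add hv', ← Real.rpow_add hv']
          ring_nf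

-- === from b4.lean ===
lemma hilb_moment (a δ : ℝ) (ha : -1 < a) :
    ∃ K : ℝ, 0 < K ∧ ∀ k : ℕ,
      IntegrableOn (fun s => s ^ k * (1-s) ^ a * hilbL s ^ δ) (Ioo (0:ℝ) 1) ∧
      ∫ s in Ioo (0:ℝ) 1, s ^ k * (1-s) ^ a * hilbL s ^ δ
        ≤ K * (1 + Real.log ((k:ℝ)+1)) ^ δ / ((k:ℝ)+1) ^ (a+1) := by
  set G : ℝ → ℝ := fun v => Real.exp (-v) * v ^ a * (1+|Real.log v|) ^ |δ| with hGdef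
  have hG : IntegrableOn G (Ioi (0:ℝ)) := hilbG_integrable a |δ| ha (abs_nonneg δ)
  have hGnn : ∀ v : ℝ, 0 ≤ v → 0 ≤ G v := by
    intro v hv
    have : (0:ℝ) ≤ v ^ a := Real.rpow_nonneg hv a
    have h2 : (0:ℝ) ≤ (1+|Real.log v|) ^ |δ| :=
      Real.rpow_nonneg (by have := abs_nonneg (Real.log v); linarith) _
    positivity
  set Cinf : ℝ := ∫ v in Ioi (0:ℝ), G v with hCinf
  have hCnn : 0 ≤ Cinf := setIntegral_nonneg measurableSet_Ioi fun v hv => hGnn v (le_of_lt hv)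
  refine ⟨Real.exp 1 * Cinf + 1, by positivity, fun k => ?_⟩
  set ν : ℝ := (k:ℝ) + 1 with hν
  have hν1 : (1:ℝ) ≤ ν := by rw [hν]; exact_mod_cast Nat.le_add_left 1 k
  have hν0 : (0:ℝ) < ν := lt_of_lt_of_le one_pos hν1
  set B : ℝ → ℝ := fun s => (Real.exp 1 * (1 + Real.log ν) ^ δ * ν ^ (-a)) * G (ν * (1-s))
    with hBdef
  -- pointwise bound
  have hpt : ∀ s ∈ Ioo (0:ℝ) 1, s ^ k * (1-s) ^ a * hilbL s ^ δ ≤ B s := by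
    rintro s ⟨hs0, hs1⟩
    have hu : (0:ℝ) < 1 - s := by linarith
    have hu1 : 1 - s ≤ 1 := by linarith
    -- (1) s^k ≤ e * exp(-ν(1-s))
    have h1 : s ^ k ≤ Real.exp 1 * Real.exp (-(ν * (1-s))) := by
      have hse : s ≤ Real.exp (-(1-s)) := by
        have := Real.add_one_le_exp (-(1-s))
        linarith
      have : s ^ k ≤ Real.exp (-(1-s)) ^ k := pow_le_pow_left₀ hs0.le hse k
      rw [← Real.exp_nat_mul] at this
      refine this.trans ?_
      rw [← Real.exp_add]
      apply Real.exp_le_exp.2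
      rw [hν]
      nlinarith [hs0]
    -- (2) hilbL^δ bound
    have h2 : hilbL s ^ δ ≤ (1 + Real.log ν) ^ δ * (1+|Real.log (ν * (1-s))|) ^ |δ| := by
      have hx : (0:ℝ) ≤ -Real.log (1-s) := by
        have := Real.log_nonpos hu.le hu1
        linarith
      have hlν : (0:ℝ) ≤ Real.log ν := Real.log_nonneg hν1
      have := hilb_ptwise δ (-Real.log (1-s)) (Real.log ν) hx hlν
      rw [hilbL_eq hs1]
      have habs : |-Real.log (1-s) - Real.log ν| = |Real.log (ν * (1-s))| := by
        rw [Real.log_mul (ne_of_gt hν0) (ne_of_gt hu), ← abs_neg]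
        ring_nf
      rw [habs] at this
      calc (1 - Real.log (1-s)) ^ δ = (1 + -Real.log (1-s)) ^ δ := by ring_nf
        _ ≤ _ := this
    -- (3) (1-s)^a = ν^(-a) * (ν (1-s))^a
    have h3 : (1-s) ^ a = ν ^ (-a) * (ν * (1-s)) ^ a := by
      rw [Real.mul_rpow hν0.le hu.le, ← mul_assoc, ← Real.rpow_add hν0]
      simp
    have hLpos : (0:ℝ) < hilbL s ^ δ := Real.rpow_pos_of_pos (hilbL_pos hs0.le hs1) δ
    have hgoal : s ^ k * (1-s) ^ a * hilbL s ^ δ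
        ≤ (Real.exp 1 * Real.exp (-(ν * (1-s)))) * ((1-s) ^ a) * ((1 + Real.log ν) ^ δ * (1+|Real.log (ν * (1-s))|) ^ |δ|) := by
      have hua : (0:ℝ) ≤ (1-s) ^ a := Real.rpow_nonneg hu.le a
      have hsk : (0:ℝ) ≤ s ^ k := pow_nonneg hs0.le k
      apply mul_le_mul
      · exact mul_le_mul_of_nonneg_right h1 hua
      · exact h2
      · exact hLpos.le
      · positivity
    refine hgoal.trans_eq ?_
    rw [hBdef]
    simp only []
    rw [h3, hGdef]
    simp only []
    ring
  -- integrability of B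
  have hBint : IntegrableOn B (Ioo (0:ℝ) 1) := by
    apply Integrable.const_mul
    have i1 : IntervalIntegrable G volume 0 ν := by
      rw [intervalIntegrable_iff_integrableOn_Ioc_of_le hν0.le]
      exact hG.mono_set Ioc_subset_Ioi_self
    have i2 := i1.comp_mul_left (c := ν)
    rw [zero_div, div_self (ne_of_gt hν0)] at i2
    have i3 := (i2.comp_sub_left 1).symm
    norm_num at i3
    rw [intervalIntegrable_iff_integrableOn_Ioc_of_le zero_le_one] at i3
    exact (i3.mono_set Ioo_subset_Ioc_self).congr_fun (fun x _ => rfl) measurableSet_Ioo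
  -- integrability of LHS
  have hmeas : Measurable (fun s : ℝ => s ^ k * (1-s) ^ a * hilbL s ^ δ) :=
    ((measurable_id.pow_const k).mul
      ((measurable_const.sub measurable_id).pow_const a)).mul
      (measurable_hilbL.pow_const δ)
  have hLHSnn : ∀ s ∈ Ioo (0:ℝ) 1, 0 ≤ s ^ k * (1-s) ^ a * hilbL s ^ δ := by
    rintro s ⟨hs0, hs1⟩
    have h1 : (0:ℝ) ≤ (1-s) ^ a := Real.rpow_nonneg (by linarith) a
    have h2 : (0:ℝ) < hilbL s ^ δ := Real.rpow_pos_of_pos (hilbL_pos hs0.le hs1) δ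
    positivity
  have hint : IntegrableOn (fun s => s ^ k * (1-s) ^ a * hilbL s ^ δ) (Ioo (0:ℝ) 1) := by
    apply Integrable.mono' hBint hmeas.aestronglyMeasurable
    filter_upwards [self_mem_ae_restrict (measurableSet_Ioo : MeasurableSet (Ioo (0:ℝ) 1))]
      with s hs
    rw [Real.norm_eq_abs, abs_of_nonneg (hLHSnn s hs)]
    exact hpt s hs
  refine ⟨hint, ?_⟩
  have hmono : ∫ s in Ioo (0:ℝ) 1, s ^ k * (1-s) ^ a * hilbL s ^ δ ≤ ∫ s in Ioo (0:ℝ) 1, B s :=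
    setIntegral_mono_on hint hBint measurableSet_Ioo hpt
  -- compute integral of B
  have hpw : (0:ℝ) < (1 + Real.log ν) ^ δ :=
    Real.rpow_pos_of_pos (by have := Real.log_nonneg hν1; linarith) δ
  have hBval : ∫ s in Ioo (0:ℝ) 1, B s
      ≤ (Real.exp 1 * (1 + Real.log ν) ^ δ * ν ^ (-a)) * (ν⁻¹ * Cinf) := by
    rw [hBdef]
    simp only []
    rw [integral_const_mul]
    apply mul_le_mul_of_nonneg_left _
      (mul_nonneg (mul_nonneg (Real.exp_pos 1).le hpw.le) (Real.rpow_pos_of_pos hν0 (-a)).le)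
    have e0 : ∫ s in Ioo (0:ℝ) 1, G (ν * (1-s)) = ∫ s in (0:ℝ)..1, G (ν * (1-s)) := by
      rw [intervalIntegral.integral_of_le zero_le_one, integral_Ioc_eq_integral_Ioo]
    have e1 : ∫ s in (0:ℝ)..1, G (ν * (1-s)) = ∫ u in (0:ℝ)..1, G (ν * u) := by
      have := intervalIntegral.integral_comp_sub_left (a := (0:ℝ)) (b := 1) (fun u => G (ν * u)) 1
      norm_num at this
      exact this
    have e2 : ∫ u in (0:ℝ)..1, G (ν * u) = ν⁻¹ • ∫ v in (0:ℝ)..ν, G v := by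
      have := intervalIntegral.integral_comp_mul_left (a := (0:ℝ)) (b := 1) G (ne_of_gt hν0)
      rw [mul_zero, mul_one] at this
      exact this
    have e3 : ∫ v in (0:ℝ)..ν, G v ≤ Cinf := by
      rw [intervalIntegral.integral_of_le hν0.le]
      apply setIntegral_mono_set hG
      · filter_upwards [self_mem_ae_restrict (measurableSet_Ioi : MeasurableSet (Ioi (0:ℝ)))]
          with v hv
        exact hGnn v (le_of_lt hv)
      · exact HasSubset.Subset.eventuallyLE Ioc_subset_Ioi_self
    rw [e0, e1, e2]
    rw [smul_eq_mul]
    exact mul_le_mul_of_nonneg_left e3 (by positivity)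
  refine (hmono.trans hBval).trans ?_
  have hre : (Real.exp 1 * (1 + Real.log ν) ^ δ * ν ^ (-a)) * (ν⁻¹ * Cinf)
      = (Real.exp 1 * Cinf) * (1 + Real.log ν) ^ δ / ν ^ (a+1) := by
    rw [Real.rpow_neg hν0.le, Real.rpow_add hν0, Real.rpow_one]
    field_simp
  rw [hν] at hpw
  rw [hre, hν]
  have hd : (0:ℝ) < ((k:ℝ)+1) ^ (a+1) := Real.rpow_pos_of_pos hν0 _
  rw [div_le_div_iff_of_pos_right hd]
  nlinarith [hpw]

-- === from b5.lean ===
lemma continuousOn_hilbL : ContinuousOn hilbL (Iio (1:ℝ)) := by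
  unfold hilbL
  apply ContinuousOn.log
  · exact continuousOn_const.div (continuous_const.sub continuous_id).continuousOn
      (fun x hx => by simp only [mem_Iio] at hx; intro h; linarith [sub_eq_zero.1 h])
  · intro x hx
    simp only [mem_Iio] at hx
    have h1 : (0:ℝ) < 1 - x := by linarith
    positivity

section fubini

variable {μ : Measure ℝ} {β γ α C : ℝ} {n : ℕ}

/-- the derivative of `t ↦ t^n (hilbL t)^(β+1)` -/
noncomputable def hilbPsi (β : ℝ) (n : ℕ) (s : ℝ) : ℝ :=
  (n:ℝ) * s ^ (n-1) * hilbL s ^ (β+1) + s ^ n * ((1-s)⁻¹ * (β+1) * hilbL s ^ β)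

lemma hilbPsi_hasDeriv (hβ : -1 < β) {s : ℝ} (hs0 : 0 ≤ s) (hs1 : s < 1) :
    HasDerivAt (fun t => t ^ n * hilbL t ^ (β+1)) (hilbPsi β n s) s := by
  have hd1 : HasDerivAt (fun y : ℝ => y ^ n) ((n:ℝ) * s ^ (n-1)) s := hasDerivAt_pow n s
  have hdL : HasDerivAt hilbL ((1-s)⁻¹) s := by
    have h2 : HasDerivAt (fun y : ℝ => 1 - Real.log (1-y)) ((1-s)⁻¹) s := by
      have h3 : HasDerivAt (fun y : ℝ => (1:ℝ) - y) (-1) s := by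
        simpa using (hasDerivAt_id s).const_sub 1
      have h4 := h3.log (by intro h; rw [sub_eq_zero] at h; linarith)
      have h5 := h4.const_sub 1
      refine h5.congr_deriv ?_
      ring
    apply h2.congr_of_eventuallyEq
    filter_upwards [Iio_mem_nhds hs1] with y hy
    exact hilbL_eq hy
  have hd2 := hdL.rpow_const (p := β+1) (Or.inl (ne_of_gt (hilbL_pos hs0 hs1)))
  have hd3 := hd1.mul hd2
  refine hd3.congr_deriv ?_
  unfold hilbPsi
  rw [show β + 1 - 1 = β from by ring]
  try ring

lemma hilbPsi_continuousOn : ContinuousOn (hilbPsi β n) (Ico 0 1) := by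
  have hsub : Ico (0:ℝ) 1 ⊆ Iio 1 := fun x hx => hx.2
  have hL : ContinuousOn hilbL (Ico (0:ℝ) 1) := continuousOn_hilbL.mono hsub
  have hLne : ∀ s ∈ Ico (0:ℝ) 1, hilbL s ≠ 0 := fun s hs => ne_of_gt (hilbL_pos hs.1 hs.2)
  apply ContinuousOn.add
  · exact (continuousOn_const.mul (continuous_pow (n-1)).continuousOn).mul
      (hL.rpow_const fun s hs => Or.inl (hLne s hs))
  · refine (continuous_pow n).continuousOn.mul ?_
    refine (ContinuousOn.mul ?_ ?_).mul (hL.rpow_const fun s hs => Or.inl (hLne s hs))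
    · exact ContinuousOn.inv₀ (continuous_const.sub continuous_id).continuousOn
        (fun s hs => by intro h; rw [sub_eq_zero] at h; exact absurd hs.2 (by rw [← h]; simp))
    · exact continuousOn_const

lemma hilbPsi_nonneg (hβ : -1 < β) {s : ℝ} (hs0 : 0 ≤ s) (hs1 : s < 1) :
    0 ≤ hilbPsi β n s := by
  unfold hilbPsi
  have h1 : (0:ℝ) < hilbL s ^ (β+1) := Real.rpow_pos_of_pos (hilbL_pos hs0 hs1) _
  have h2 : (0:ℝ) < hilbL s ^ β := Real.rpow_pos_of_pos (hilbL_pos hs0 hs1) _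
  have h3 : (0:ℝ) < (1-s)⁻¹ := inv_pos.2 (by linarith)
  have h4 : (0:ℝ) ≤ (β+1) := by linarith
  positivity

lemma measurable_hilbPsi : Measurable (hilbPsi β n) := by
  unfold hilbPsi
  exact ((measurable_const.mul (measurable_id.pow_const (n-1))).mul
    (measurable_hilbL.pow_const (β+1))).add
    ((measurable_id.pow_const n).mul
      (((measurable_const.sub measurable_id).inv.mul measurable_const).mul
        (measurable_hilbL.pow_const β)))

lemma hilb_ftc (hβ : -1 < β) (hn : 1 ≤ n) {t : ℝ} (ht0 : 0 ≤ t) (ht1 : t < 1) :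
    t ^ n * hilbL t ^ (β+1) = ∫ s in Ioo (0:ℝ) t, hilbPsi β n s := by
  have hInt : IntervalIntegrable (hilbPsi β n) volume 0 t := by
    apply ContinuousOn.intervalIntegrable
    apply hilbPsi_continuousOn.mono
    rw [uIcc_of_le ht0]
    exact fun x hx => ⟨hx.1, lt_of_le_of_lt hx.2 ht1⟩
  have hderiv : ∀ s ∈ uIcc (0:ℝ) t, HasDerivAt (fun y => y ^ n * hilbL y ^ (β+1))
      (hilbPsi β n s) s := by
    intro s hs
    rw [uIcc_of_le ht0] at hs
    exact hilbPsi_hasDeriv hβ hs.1 (lt_of_le_of_lt hs.2 ht1)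
  have := intervalIntegral.integral_eq_sub_of_hasDerivAt hderiv hInt
  rw [intervalIntegral.integral_of_le ht0, integral_Ioc_eq_integral_Ioo] at this
  rw [this]
  have hn0 : (0:ℝ) ^ n = 0 := zero_pow (by omega)
  rw [hn0]
  ring

end fubini

-- === from b6.lean ===
lemma hilbPsi_integrableOn {β : ℝ} {n : ℕ} {t : ℝ} (ht0 : 0 ≤ t) (ht1 : t < 1) :
    IntegrableOn (hilbPsi β n) (Ioo 0 t) volume := by
  have h1 : ContinuousOn (hilbPsi β n) (Icc 0 t) := by
    apply hilbPsi_continuousOn.mono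
    intro x hx
    exact ⟨hx.1, lt_of_le_of_lt hx.2 ht1⟩
  exact h1.integrableOn_Icc.mono_set Ioo_subset_Icc_self

lemma hilb_swap (μ : Measure ℝ) (β : ℝ) (hβ : -1 < β) (n : ℕ) (hn : 1 ≤ n)
    (hfin : μ (Ico (0:ℝ) 1) < ⊤) :
    ∫⁻ t in Ico (0:ℝ) 1, ENNReal.ofReal (t ^ n * hilbL t ^ (β+1)) ∂μ
      = ∫⁻ s in Ioo (0:ℝ) 1, ENNReal.ofReal (hilbPsi β n s) * μ (Ioo s 1) := by
  haveI hfm : IsFiniteMeasure (μ.restrict (Ico (0:ℝ) 1)) :=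
    ⟨by rwa [Measure.restrict_apply_univ]⟩
  set F : ℝ → ℝ → ℝ≥0∞ := fun t s => if s < t then ENNReal.ofReal (hilbPsi β n s) else 0
    with hF
  have claimA : ∀ t ∈ Ico (0:ℝ) 1,
      ENNReal.ofReal (t ^ n * hilbL t ^ (β+1)) = ∫⁻ s in Ioo (0:ℝ) 1, F t s := by
    rintro t ⟨ht0, ht1⟩
    have hFt : (fun s => F t s) = (Iio t).indicator (fun s => ENNReal.ofReal (hilbPsi β n s)) := by
      funext s
      rw [hF]
      simp only [indicator, mem_Iio]
    rw [hFt, lintegral_indicator measurableSet_Iio, Measure.restrict_restrict measurableSet_Iio]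
    have hset : Iio t ∩ Ioo (0:ℝ) 1 = Ioo 0 t := by
      ext x
      simp only [mem_inter_iff, mem_Iio, mem_Ioo]
      constructor
      · rintro ⟨h1, h2, h3⟩; exact ⟨h2, h1⟩
      · rintro ⟨h1, h2⟩; exact ⟨h2, h1, lt_of_lt_of_le h2 (le_of_lt ht1)⟩
    rw [hset]
    rw [← ofReal_integral_eq_lintegral_ofReal (hilbPsi_integrableOn ht0 ht1)]
    · rw [← hilb_ftc hβ hn ht0 ht1]
    · filter_upwards [self_mem_ae_restrict (measurableSet_Ioo : MeasurableSet (Ioo (0:ℝ) t))]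
        with s hs
      exact hilbPsi_nonneg hβ hs.1.le (lt_of_lt_of_le hs.2 ht1.le)
  have claimB : ∀ s ∈ Ioo (0:ℝ) 1,
      ∫⁻ t in Ico (0:ℝ) 1, F t s ∂μ = ENNReal.ofReal (hilbPsi β n s) * μ (Ioo s 1) := by
    rintro s ⟨hs0, hs1⟩
    have hFs : (fun t => F t s) = (Ioi s).indicator (fun _ => ENNReal.ofReal (hilbPsi β n s)) := by
      funext t
      rw [hF]
      simp only [indicator, mem_Ioi]
    rw [hFs, lintegral_indicator measurableSet_Ioi, Measure.restrict_restrict measurableSet_Ioi]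
    have hset : Ioi s ∩ Ico (0:ℝ) 1 = Ioo s 1 := by
      ext x
      simp only [mem_inter_iff, mem_Ioi, mem_Ico, mem_Ioo]
      constructor
      · rintro ⟨h1, _, h3⟩; exact ⟨h1, h3⟩
      · rintro ⟨h1, h2⟩; exact ⟨h1, le_of_lt (lt_trans hs0 h1), h2⟩
    rw [hset, lintegral_const, Measure.restrict_apply MeasurableSet.univ, univ_inter]
  calc ∫⁻ t in Ico (0:ℝ) 1, ENNReal.ofReal (t ^ n * hilbL t ^ (β+1)) ∂μ
      = ∫⁻ t in Ico (0:ℝ) 1, (∫⁻ s in Ioo (0:ℝ) 1, F t s) ∂μ := by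
        apply setLIntegral_congr_fun measurableSet_Ico
        intro t ht
        exact claimA t ht
    _ = ∫⁻ s in Ioo (0:ℝ) 1, (∫⁻ t in Ico (0:ℝ) 1, F t s ∂μ) := by
        apply lintegral_lintegral_swap
        apply Measurable.aemeasurable
        have : (Function.uncurry F) = fun p : ℝ × ℝ =>
            if p.2 < p.1 then ENNReal.ofReal (hilbPsi β n p.2) else 0 := by
          funext p
          rw [Function.uncurry, hF]
        rw [this]
        exact Measurable.ite (measurableSet_lt measurable_snd measurable_fst)
          ((ENNReal.measurable_ofReal.comp measurable_hilbPsi).comp measurable_snd)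
          measurable_const
    _ = ∫⁻ s in Ioo (0:ℝ) 1, ENNReal.ofReal (hilbPsi β n s) * μ (Ioo s 1) := by
        apply setLIntegral_congr_fun measurableSet_Ioo
        intro s hs
        exact claimB s hs

-- === from b7.lean ===
lemma hilb_phi_integrable (μ : Measure ℝ) (β : ℝ) (hβ : -1 < β)
    (hμ : Integrable (fun t => hilbL t ^ β / (1 - t)) (μ.restrict (Ico 0 1))) (n : ℕ) :
    Integrable (fun t => t ^ n * hilbL t ^ (β+1)) (μ.restrict (Ico 0 1)) := by
  apply Integrable.mono' hμ
  · exact ((measurable_id.pow_const n).mul (measurable_hilbL.pow_const (β+1))).aestronglyMeasurable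
  · filter_upwards [self_mem_ae_restrict (measurableSet_Ico : MeasurableSet (Ico (0:ℝ) 1))]
      with t ht
    obtain ⟨ht0, ht1⟩ := ht
    have hL := hilbL_pos ht0 ht1
    have h1 : (0:ℝ) < 1 - t := by linarith
    have htn : t ^ n ≤ 1 := pow_le_one₀ ht0 (le_of_lt ht1)
    have hnn : (0:ℝ) ≤ t ^ n * hilbL t ^ (β+1) := by
      have := Real.rpow_nonneg hL.le (β+1)
      positivity
    rw [Real.norm_eq_abs, abs_of_nonneg hnn]
    have e1 : hilbL t ^ (β+1) = hilbL t ^ β * hilbL t := by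
      rw [← Real.rpow_add_one (ne_of_gt hL)]
    calc t ^ n * hilbL t ^ (β+1) ≤ 1 * hilbL t ^ (β+1) := by
          apply mul_le_mul_of_nonneg_right htn (Real.rpow_nonneg hL.le _)
      _ = hilbL t ^ β * hilbL t := by rw [one_mul, e1]
      _ ≤ hilbL t ^ β * (1/(1-t)) := by
          apply mul_le_mul_of_nonneg_left (hilbL_le ht0 ht1) (Real.rpow_nonneg hL.le _)
      _ = hilbL t ^ β / (1-t) := by ring

lemma hilb_log_compare (δ : ℝ) : ∃ c : ℝ, 0 < c ∧ ∀ n : ℕ, 1 ≤ n →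
    (1 + Real.log n) ^ δ ≤ c * Real.log ((n:ℝ)+1) ^ δ ∧
    (1 + Real.log ((n:ℝ)+1)) ^ δ ≤ c * Real.log ((n:ℝ)+1) ^ δ := by
  have l2 : (0:ℝ) < Real.log 2 := Real.log_pos one_lt_two
  set c0 : ℝ := 1/Real.log 2 + 1 with hc0
  have hc0p : 0 < c0 := by positivity
  refine ⟨max (c0 ^ δ) 1, lt_of_lt_of_le one_pos (le_max_right _ _), fun n hn => ?_⟩
  have hn1 : (1:ℝ) ≤ (n:ℝ) := by exact_mod_cast hn
  have hlogn : (0:ℝ) ≤ Real.log n := Real.log_nonneg hn1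
  have hlogn1 : (0:ℝ) < Real.log ((n:ℝ)+1) := Real.log_pos (by linarith)
  have p1 : Real.log 2 ≤ Real.log ((n:ℝ)+1) := Real.log_le_log (by norm_num) (by linarith)
  have p2 : Real.log ((n:ℝ)+1) ≤ 1 + Real.log n := by
    have h1 : Real.log ((n:ℝ)+1) ≤ Real.log (2*n) :=
      Real.log_le_log (by linarith) (by linarith)
    rw [Real.log_mul two_ne_zero (by positivity)] at h1
    have h2 : Real.log 2 ≤ 1 := by
      have := Real.log_le_sub_one_of_pos (by norm_num : (0:ℝ) < 2)
      linarith
    linarith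
  have p3 : 1 + Real.log ((n:ℝ)+1) ≤ c0 * Real.log ((n:ℝ)+1) := by
    have h1 : (1:ℝ) ≤ (1/Real.log 2) * Real.log ((n:ℝ)+1) := by
      rw [div_mul_eq_mul_div, one_mul, le_div_iff₀ l2, one_mul]
      exact p1
    rw [hc0]
    nlinarith
  have p2' : 1 + Real.log (n:ℝ) ≤ c0 * Real.log ((n:ℝ)+1) := by
    have : Real.log (n:ℝ) ≤ Real.log ((n:ℝ)+1) := Real.log_le_log (by positivity) (by linarith)
    linarith
  have hb1 : (0:ℝ) < 1 + Real.log n := by linarith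
  have hb2 : (0:ℝ) < 1 + Real.log ((n:ℝ)+1) := by linarith
  rcases le_or_gt 0 δ with hd | hd
  · constructor
    · calc (1 + Real.log n) ^ δ ≤ (c0 * Real.log ((n:ℝ)+1)) ^ δ :=
            Real.rpow_le_rpow hb1.le p2' hd
        _ = c0 ^ δ * Real.log ((n:ℝ)+1) ^ δ := Real.mul_rpow hc0p.le hlogn1.le
        _ ≤ max (c0 ^ δ) 1 * Real.log ((n:ℝ)+1) ^ δ := by
            apply mul_le_mul_of_nonneg_right (le_max_left _ _)
              (Real.rpow_nonneg hlogn1.le _)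
    · calc (1 + Real.log ((n:ℝ)+1)) ^ δ ≤ (c0 * Real.log ((n:ℝ)+1)) ^ δ :=
            Real.rpow_le_rpow hb2.le p3 hd
        _ = c0 ^ δ * Real.log ((n:ℝ)+1) ^ δ := Real.mul_rpow hc0p.le hlogn1.le
        _ ≤ max (c0 ^ δ) 1 * Real.log ((n:ℝ)+1) ^ δ := by
            apply mul_le_mul_of_nonneg_right (le_max_left _ _)
              (Real.rpow_nonneg hlogn1.le _)
  · have key : ∀ b : ℝ, Real.log ((n:ℝ)+1) ≤ b → 0 < b →
        b ^ δ ≤ max (c0 ^ δ) 1 * Real.log ((n:ℝ)+1) ^ δ := by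
      intro b hb hbp
      have h1 : b ^ δ ≤ Real.log ((n:ℝ)+1) ^ δ :=
        Real.rpow_le_rpow_of_nonpos hlogn1 hb hd.le
      have h2 : (0:ℝ) < Real.log ((n:ℝ)+1) ^ δ := Real.rpow_pos_of_pos hlogn1 _
      calc b ^ δ ≤ Real.log ((n:ℝ)+1) ^ δ := h1
        _ = 1 * Real.log ((n:ℝ)+1) ^ δ := (one_mul _).symm
        _ ≤ max (c0 ^ δ) 1 * Real.log ((n:ℝ)+1) ^ δ := by
            apply mul_le_mul_of_nonneg_right (le_max_right _ _) h2.le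
    exact ⟨key _ p2 hb1, key _ (by linarith) hb2⟩

-- === from b8.lean ===
lemma hilb_forward (μ : Measure ℝ) (α β γ C : ℝ) (hα : -1 < α) (hβ : -1 < β) (hC : 0 < C)
    (hfin : μ (Ico (0:ℝ) 1) < ⊤)
    (hφint : ∀ n : ℕ, Integrable (fun t => t ^ n * hilbL t ^ (β+1)) (μ.restrict (Ico 0 1)))
    (hcar : ∀ t ∈ Ico (0:ℝ) 1,
      (μ (Ico t 1)).toReal * hilbL t ^ (β + 1 - γ) ≤ C * (1 - t) ^ (α + 1)) :
    ∃ M : ℝ, ∀ n : ℕ, 1 ≤ n →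
      (n:ℝ) ^ (α + 1) * Real.log ((n:ℝ) + 1) ^ (-γ) *
        ∫ t in Ico (0:ℝ) 1, t ^ n * hilbL t ^ (β + 1) ∂μ ≤ M := by
  obtain ⟨K₁, hK₁, hm₁⟩ := hilb_moment (α+1) γ (by linarith)
  obtain ⟨K₂, hK₂, hm₂⟩ := hilb_moment α (γ-1) hα
  obtain ⟨c₁, hc₁, hlc₁⟩ := hilb_log_compare γ
  obtain ⟨c₂, hc₂, hlc₂⟩ := hilb_log_compare (γ-1)
  have l2 : (0:ℝ) < Real.log 2 := Real.log_pos one_lt_two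
  refine ⟨C * (K₁ * c₁ + (β+1) * (K₂ * c₂ / Real.log 2)), fun n hn => ?_⟩
  set M : ℝ := C * (K₁ * c₁ + (β+1) * (K₂ * c₂ / Real.log 2)) with hM
  have hn1 : (1:ℝ) ≤ (n:ℝ) := by exact_mod_cast hn
  have hnp : (0:ℝ) < (n:ℝ) := by linarith
  have hlogn1 : (0:ℝ) < Real.log ((n:ℝ)+1) := Real.log_pos (by linarith)
  set I : ℝ := ∫ t in Ico (0:ℝ) 1, t ^ n * hilbL t ^ (β + 1) ∂μ with hI
  -- nonneg of I
  have hφnn : 0 ≤ᵐ[μ.restrict (Ico (0:ℝ) 1)] fun t => t ^ n * hilbL t ^ (β+1) := by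
    filter_upwards [self_mem_ae_restrict (measurableSet_Ico : MeasurableSet (Ico (0:ℝ) 1))]
      with t ht
    have := Real.rpow_nonneg (hilbL_pos ht.1 ht.2).le (β+1)
    have := ht.1
    positivity
  have hInn : 0 ≤ I := integral_nonneg_of_ae hφnn
  -- the dominating function
  set g₁ : ℝ → ℝ := fun s => s ^ (n-1) * (1-s) ^ (α+1) * hilbL s ^ γ with hg₁
  set g₂ : ℝ → ℝ := fun s => s ^ n * (1-s) ^ α * hilbL s ^ (γ-1) with hg₂
  set h : ℝ → ℝ := fun s => C * ((n:ℝ) * g₁ s + (β+1) * g₂ s) with hh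
  have hhint : IntegrableOn h (Ioo (0:ℝ) 1) volume := by
    apply Integrable.const_mul
    exact (((hm₁ (n-1)).1.const_mul _).add ((hm₂ n).1.const_mul _))
  have hhnn : ∀ s ∈ Ioo (0:ℝ) 1, 0 ≤ h s := by
    rintro s ⟨hs0, hs1⟩
    have hu : (0:ℝ) < 1 - s := by linarith
    have hL := hilbL_pos hs0.le hs1
    have e1 : (0:ℝ) ≤ (1-s) ^ (α+1) := Real.rpow_nonneg hu.le _
    have e2 : (0:ℝ) ≤ (1-s) ^ α := Real.rpow_nonneg hu.le _
    have e3 : (0:ℝ) ≤ hilbL s ^ γ := Real.rpow_nonneg hL.le _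
    have e4 : (0:ℝ) ≤ hilbL s ^ (γ-1) := Real.rpow_nonneg hL.le _
    have e5 : (0:ℝ) ≤ β + 1 := by linarith
    rw [hh, hg₁, hg₂]
    simp only []
    positivity
  -- key pointwise bound in ℝ≥0∞ on Ioo 0 1
  have hkey : ∀ s ∈ Ioo (0:ℝ) 1,
      ENNReal.ofReal (hilbPsi β n s) * μ (Ioo s 1) ≤ ENNReal.ofReal (h s) := by
    rintro s ⟨hs0, hs1⟩
    have hu : (0:ℝ) < 1 - s := by linarith
    have hL := hilbL_pos hs0.le hs1
    have hψnn := hilbPsi_nonneg (β := β) (n := n) hβ hs0.le hs1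
    have hne : μ (Ico s 1) ≠ ⊤ := by
      refine ne_of_lt (lt_of_le_of_lt (measure_mono ?_) hfin)
      exact fun x hx => ⟨le_trans hs0.le hx.1, hx.2⟩
    have hLp : (0:ℝ) < hilbL s ^ (β+1-γ) := Real.rpow_pos_of_pos hL _
    have hcar' : (μ (Ico s 1)).toReal ≤ C * (1-s) ^ (α+1) * hilbL s ^ (γ-β-1) := by
      have h1 := hcar s ⟨hs0.le, hs1⟩
      have e1 : hilbL s ^ (γ-β-1) = (hilbL s ^ (β+1-γ))⁻¹ := by
        rw [show γ-β-1 = -(β+1-γ) from by ring, Real.rpow_neg hL.le]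
      rw [e1, mul_comm (C * (1-s)^(α+1)), ← div_eq_inv_mul, le_div_iff₀ hLp]
      exact h1
    have hmeas_le : μ (Ioo s 1) ≤ ENNReal.ofReal (C * (1-s) ^ (α+1) * hilbL s ^ (γ-β-1)) := by
      calc μ (Ioo s 1) ≤ μ (Ico s 1) := measure_mono Ioo_subset_Ico_self
        _ = ENNReal.ofReal ((μ (Ico s 1)).toReal) := (ENNReal.ofReal_toReal hne).symm
        _ ≤ _ := ENNReal.ofReal_le_ofReal hcar'
    calc ENNReal.ofReal (hilbPsi β n s) * μ (Ioo s 1)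
        ≤ ENNReal.ofReal (hilbPsi β n s) *
            ENNReal.ofReal (C * (1-s) ^ (α+1) * hilbL s ^ (γ-β-1)) :=
          mul_le_mul_right hmeas_le _
      _ = ENNReal.ofReal (hilbPsi β n s * (C * (1-s) ^ (α+1) * hilbL s ^ (γ-β-1))) :=
          (ENNReal.ofReal_mul hψnn).symm
      _ = ENNReal.ofReal (h s) := by
          congr 1
          rw [hh, hg₁, hg₂]
          simp only [hilbPsi]
          have r1 : hilbL s ^ (β+1) * hilbL s ^ (γ-β-1) = hilbL s ^ γ := by
            rw [← Real.rpow_add hL]; ring_nf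
          have r2 : hilbL s ^ β * hilbL s ^ (γ-β-1) = hilbL s ^ (γ-1) := by
            rw [← Real.rpow_add hL]; ring_nf
          have r3 : (1-s)⁻¹ * (1-s) ^ (α+1) = (1-s) ^ α := by
            rw [Real.rpow_add hu, Real.rpow_one]
            field_simp
          calc ((n:ℝ) * s ^ (n-1) * hilbL s ^ (β+1) + s ^ n * ((1-s)⁻¹ * (β+1) * hilbL s ^ β))
                * (C * (1-s) ^ (α+1) * hilbL s ^ (γ-β-1))
              = C * ((n:ℝ) * (s^(n-1) * (1-s)^(α+1) * (hilbL s ^ (β+1) * hilbL s ^ (γ-β-1)))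
                + (β+1) * (s^n * ((1-s)⁻¹ * (1-s)^(α+1)) * (hilbL s ^ β * hilbL s ^ (γ-β-1)))) := by
                ring
            _ = _ := by rw [r1, r2, r3]
  -- chain in ℝ≥0∞
  have hchain : ENNReal.ofReal I ≤ ENNReal.ofReal (∫ s in Ioo (0:ℝ) 1, h s) := by
    rw [hI, ofReal_integral_eq_lintegral_ofReal (hφint n) hφnn]
    rw [hilb_swap μ β hβ n hn hfin]
    rw [ofReal_integral_eq_lintegral_ofReal hhint ?hnn]
    case hnn =>
      filter_upwards [self_mem_ae_restrict (measurableSet_Ioo : MeasurableSet (Ioo (0:ℝ) 1))]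
        with s hs
      exact hhnn s hs
    apply lintegral_mono_ae
    filter_upwards [self_mem_ae_restrict (measurableSet_Ioo : MeasurableSet (Ioo (0:ℝ) 1))]
      with s hs
    exact hkey s hs
  have hIle : I ≤ ∫ s in Ioo (0:ℝ) 1, h s := by
    have hhI : 0 ≤ ∫ s in Ioo (0:ℝ) 1, h s := by
      apply setIntegral_nonneg measurableSet_Ioo hhnn
    exact (ENNReal.ofReal_le_ofReal_iff hhI).1 hchain
  -- evaluate the h-integral
  have hval : ∫ s in Ioo (0:ℝ) 1, h s
      = C * ((n:ℝ) * ∫ s in Ioo (0:ℝ) 1, g₁ s) + C * ((β+1) * ∫ s in Ioo (0:ℝ) 1, g₂ s) := by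
    rw [hh]
    rw [integral_const_mul]
    rw [integral_add ((hm₁ (n-1)).1.const_mul _) ((hm₂ n).1.const_mul _)]
    rw [integral_const_mul, integral_const_mul]
    ring
  -- bounds for the two integrals
  have hcast : ((n-1 : ℕ):ℝ) + 1 = (n:ℝ) := by
    have : (1:ℕ) ≤ n := hn
    push_cast [Nat.cast_sub this]
    ring
  have hb₁ : ∫ s in Ioo (0:ℝ) 1, g₁ s ≤ K₁ * (c₁ * Real.log ((n:ℝ)+1) ^ γ) / (n:ℝ) ^ (α+1+1) := by
    have := (hm₁ (n-1)).2
    rw [hcast] at this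
    refine this.trans ?_
    have hd : (0:ℝ) < (n:ℝ) ^ (α+1+1) := Real.rpow_pos_of_pos hnp _
    rw [div_le_div_iff₀ hd hd]
    have h1 := (hlc₁ n hn).1
    have h2 := mul_le_mul_of_nonneg_right (mul_le_mul_of_nonneg_left h1 hK₁.le) hd.le
    linarith
  have hb₂ : ∫ s in Ioo (0:ℝ) 1, g₂ s
      ≤ K₂ * (c₂ * Real.log ((n:ℝ)+1) ^ (γ-1)) / (n:ℝ) ^ (α+1) := by
    have := (hm₂ n).2
    refine this.trans ?_
    have hd1 : (0:ℝ) < ((n:ℝ)+1) ^ (α+1) := Real.rpow_pos_of_pos (by linarith) _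
    have hd2 : (0:ℝ) < (n:ℝ) ^ (α+1) := Real.rpow_pos_of_pos hnp _
    have hnum : K₂ * (1 + Real.log ((n:ℝ)+1)) ^ (γ-1) ≤ K₂ * (c₂ * Real.log ((n:ℝ)+1) ^ (γ-1)) :=
      mul_le_mul_of_nonneg_left (hlc₂ n hn).2 hK₂.le
    have hden : (n:ℝ) ^ (α+1) ≤ ((n:ℝ)+1) ^ (α+1) :=
      Real.rpow_le_rpow hnp.le (by linarith) (by linarith)
    have hnum_nn : 0 ≤ K₂ * (1 + Real.log ((n:ℝ)+1)) ^ (γ-1) :=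
      mul_nonneg hK₂.le (Real.rpow_nonneg (by linarith) _)
    calc K₂ * (1 + Real.log ((n:ℝ)+1)) ^ (γ-1) / ((n:ℝ)+1) ^ (α+1)
        ≤ K₂ * (1 + Real.log ((n:ℝ)+1)) ^ (γ-1) / (n:ℝ) ^ (α+1) := by
          apply div_le_div_of_nonneg_left hnum_nn hd2 hden
      _ ≤ K₂ * (c₂ * Real.log ((n:ℝ)+1) ^ (γ-1)) / (n:ℝ) ^ (α+1) := by
          rw [div_le_div_iff_of_pos_right hd2]
          exact hnum
  -- final assembly
  set lg : ℝ := Real.log ((n:ℝ)+1) with hlg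
  set A : ℝ := (n:ℝ) ^ (α+1) with hA
  have hApos : 0 < A := Real.rpow_pos_of_pos hnp _
  have hGpos : 0 < lg ^ γ := Real.rpow_pos_of_pos hlogn1 _
  set Traw : ℝ := C * ((n:ℝ) * (K₁ * (c₁ * lg ^ γ) / (n:ℝ) ^ (α+1+1)))
      + C * ((β+1) * (K₂ * (c₂ * lg ^ (γ-1)) / A)) with hTraw
  have hIT : I ≤ Traw := by
    refine hIle.trans ?_
    rw [hval, hTraw]
    apply add_le_add
    · apply mul_le_mul_of_nonneg_left _ hC.le
      exact mul_le_mul_of_nonneg_left hb₁ (Nat.cast_nonneg n)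
    · apply mul_le_mul_of_nonneg_left _ hC.le
      exact mul_le_mul_of_nonneg_left hb₂ (by linarith)
  have f1 : (n:ℝ) ^ (α+1+1) = A * (n:ℝ) := by
    rw [hA, Real.rpow_add hnp, Real.rpow_one]
  have f2 : lg ^ (-γ) = (lg ^ γ)⁻¹ := Real.rpow_neg hlogn1.le γ
  have f3 : lg ^ (γ-1) = lg ^ γ * lg⁻¹ := by
    rw [Real.rpow_sub hlogn1, Real.rpow_one, div_eq_mul_inv]
  have hcomp : A * (lg ^ γ)⁻¹ * Traw = C*K₁*c₁ + C*(β+1)*(K₂*c₂) * lg⁻¹ := by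
    rw [hTraw, f1, f3]
    field_simp
  have hlginv : lg⁻¹ ≤ (Real.log 2)⁻¹ := by
    apply inv_anti₀ l2
    exact Real.log_le_log (by norm_num) (by push_cast; linarith)
  have hfinal : A * lg ^ (-γ) * I ≤ M := by
    rw [f2]
    calc A * (lg ^ γ)⁻¹ * I ≤ A * (lg ^ γ)⁻¹ * Traw := by
          apply mul_le_mul_of_nonneg_left hIT (mul_nonneg hApos.le (inv_nonneg.2 hGpos.le))
      _ = C*K₁*c₁ + C*(β+1)*(K₂*c₂) * lg⁻¹ := hcomp
      _ ≤ M := by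
          rw [hM]
          have h1 : 0 ≤ C*(β+1)*(K₂*c₂) :=
            mul_nonneg (mul_nonneg hC.le (by linarith)) (by positivity)
          have h2 : C*(β+1)*(K₂*c₂) * lg⁻¹ ≤ C*(β+1)*(K₂*c₂) * (Real.log 2)⁻¹ :=
            mul_le_mul_of_nonneg_left hlginv h1
          have h3 : C * (K₁ * c₁ + (β+1) * (K₂ * c₂ / Real.log 2))
              = C*K₁*c₁ + C*(β+1)*(K₂*c₂) * (Real.log 2)⁻¹ := by
            field_simp
          rw [h3]
          linarith
  exact hfinal

-- === from b9.lean ===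
set_option maxHeartbeats 1000000 in
lemma hilb_backward (μ : Measure ℝ) (α β γ : ℝ) (hα : -1 < α) (hβ : -1 < β)
    (hfin : μ (Ico (0:ℝ) 1) < ⊤)
    (hφint : ∀ n : ℕ, Integrable (fun t => t ^ n * hilbL t ^ (β+1)) (μ.restrict (Ico 0 1)))
    (M : ℝ)
    (hM : ∀ n : ℕ, 1 ≤ n →
      (n:ℝ) ^ (α + 1) * Real.log ((n:ℝ) + 1) ^ (-γ) *
        ∫ t in Ico (0:ℝ) 1, t ^ n * hilbL t ^ (β + 1) ∂μ ≤ M) :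
    ∃ C > 0, ∀ t ∈ Ico (0:ℝ) 1,
      (μ (Ico t 1)).toReal * hilbL t ^ (β + 1 - γ) ≤ C * (1 - t) ^ (α + 1) := by
  have hl3 : (1:ℝ) < Real.log 3 := by
    rw [Real.lt_log_iff_exp_lt (by norm_num)]
    have := Real.exp_one_lt_d9
    linarith
  set c₃ : ℝ := max (Real.log 3 ^ γ) ((2:ℝ) ^ (-γ)) with hc₃
  have hc₃p : 0 < c₃ := lt_of_lt_of_le (Real.rpow_pos_of_pos (by linarith) γ) (le_max_left _ _)
  set m0 : ℝ := (μ (Ico (0:ℝ) 1)).toReal with hm0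
  have hm0nn : 0 ≤ m0 := ENNReal.toReal_nonneg
  set B : ℝ := max (hilbL 2⁻¹ ^ (β+1-γ)) 1 with hB
  have hBnn : (0:ℝ) < B := lt_of_lt_of_le one_pos (le_max_right _ _)
  set q : ℝ := (2:ℝ)⁻¹ ^ (α+1) with hq
  have hqp : (0:ℝ) < q := Real.rpow_pos_of_pos (by norm_num) _
  set C₁ : ℝ := m0 * B / q with hC₁
  have hC₁nn : 0 ≤ C₁ := by positivity
  set C₂ : ℝ := M * c₃ * Real.exp 4 with hC₂
  refine ⟨C₁ + max C₂ 0 + 1, by positivity, ?_⟩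
  set C : ℝ := C₁ + max C₂ 0 + 1 with hC
  rintro t ⟨ht0, ht1⟩
  have hu : (0:ℝ) < 1 - t := by linarith
  have hu1 : (0:ℝ) ≤ (1-t) ^ (α+1) := Real.rpow_nonneg hu.le _
  have hLt := hilbL_pos ht0 ht1
  rcases lt_or_ge t 2⁻¹ with hhalf | hhalf
  · -- easy case t < 1/2
    have h1 : (μ (Ico t 1)).toReal ≤ m0 := by
      apply ENNReal.toReal_mono (ne_of_lt hfin)
      exact measure_mono (Ico_subset_Ico_left ht0)
    have h2 : hilbL t ^ (β+1-γ) ≤ B := by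
      rcases le_or_gt 0 (β+1-γ) with he | he
      · refine le_trans ?_ (le_max_left _ _)
        exact Real.rpow_le_rpow hLt.le (hilbL_mono ht0 hhalf.le (by norm_num)) he
      · refine le_trans ?_ (le_max_right _ _)
        exact Real.rpow_le_one_of_one_le_of_nonpos (one_le_hilbL ht0 ht1) he.le
    have h3 : q ≤ (1-t) ^ (α+1) :=
      Real.rpow_le_rpow (by norm_num) (by linarith) (by linarith)
    calc (μ (Ico t 1)).toReal * hilbL t ^ (β+1-γ) ≤ m0 * B := by
          apply mul_le_mul h1 h2 (Real.rpow_nonneg hLt.le _) hm0nn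
      _ = C₁ * q := by rw [hC₁]; field_simp
      _ ≤ C₁ * (1-t) ^ (α+1) := mul_le_mul_of_nonneg_left h3 hC₁nn
      _ ≤ C * (1-t) ^ (α+1) := by
          apply mul_le_mul_of_nonneg_right _ hu1
          rw [hC]
          have := le_max_right C₂ (0:ℝ)
          linarith
  · -- main case t ≥ 1/2
    set u : ℝ := 1 - t with hud
    set n : ℕ := ⌈1/u⌉₊ with hn
    have hu2 : u ≤ 2⁻¹ := by rw [hud]; linarith
    have h1u : (2:ℝ) ≤ 1/u := by
      rw [le_div_iff₀ hu]
      linarith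
    have hn2 : (2:ℝ) ≤ (n:ℝ) := le_trans h1u (Nat.le_ceil _)
    have hn1 : 1 ≤ n := by exact_mod_cast le_trans (by norm_num : (1:ℝ) ≤ 2) hn2
    have hnp : (0:ℝ) < (n:ℝ) := by linarith
    have hnlow : 1/u ≤ (n:ℝ) := Nat.le_ceil _
    have hnhigh : (n:ℝ) ≤ 2/u := by
      have h1 : (n:ℝ) < 1/u + 1 := Nat.ceil_lt_add_one (by positivity)
      have h2 : 1/u + 1 ≤ 2/u := by
        rw [div_add' _ _ _ (ne_of_gt hu), div_le_div_iff₀ hu hu]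
        nlinarith
      linarith
    set lg : ℝ := Real.log ((n:ℝ)+1) with hlg
    have hlgp : (0:ℝ) < lg := Real.log_pos (by linarith)
    set L : ℝ := hilbL t with hLd
    have hL1 : (1:ℝ) ≤ L := one_le_hilbL ht0 ht1
    have hLp : (0:ℝ) < L := hLt
    -- t^n ≥ exp(-4)
    have hup2 : (0:ℝ) < 1 + 2*u := by nlinarith
    have htn : Real.exp (-4) ≤ t ^ n := by
      have hstep : Real.exp (-(2*u)) ≤ t := by
        have h1 : 2*u + 1 ≤ Real.exp (2*u) := Real.add_one_le_exp (2*u)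
        have h6 : Real.exp (-(2*u)) * (1+2*u) ≤ 1 := by
          calc Real.exp (-(2*u)) * (1+2*u) ≤ Real.exp (-(2*u)) * Real.exp (2*u) :=
                mul_le_mul_of_nonneg_left (by linarith) (Real.exp_pos _).le
            _ = 1 := by rw [← Real.exp_add]; norm_num
        have h7 : 1 ≤ t * (1+2*u) := by
          have ht : t = 1 - u := by rw [hud]; ring
          rw [ht]
          nlinarith [hu2, hu.le]
        exact le_of_mul_le_mul_right (le_trans h6 h7) hup2
      have h4 : Real.exp (-(2*u)) ^ n ≤ t ^ n :=
        pow_le_pow_left₀ (Real.exp_nonneg _) hstep n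
      refine le_trans ?_ h4
      rw [← Real.exp_nat_mul]
      apply Real.exp_le_exp.2
      have h8 : (n:ℝ) * u ≤ 2 := (le_div_iff₀ hu).1 hnhigh
      nlinarith
    -- relation between lg and L
    have hxeq : L = 1 + Real.log (1/u) := by
      rw [hLd, hilbL_eq ht1, ← hud, one_div, Real.log_inv]
      ring
    have hxnn : (0:ℝ) ≤ Real.log (1/u) := Real.log_nonneg (by linarith)
    have hA : lg ≤ Real.log 3 * L := by
      have h1 : (n:ℝ) + 1 ≤ 3/u := by
        have : (1:ℝ) ≤ 1/u := by linarith
        have e1 : 2/u + 1 ≤ 3/u := by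
          rw [div_add' _ _ _ (ne_of_gt hu), div_le_div_iff₀ hu hu]
          nlinarith
        linarith
      have h2 : lg ≤ Real.log (3/u) := Real.log_le_log (by linarith) h1
      rw [Real.log_div (by norm_num) (ne_of_gt hu)] at h2
      have h3 : Real.log 3 - Real.log u = Real.log 3 + Real.log (1/u) := by
        rw [one_div, Real.log_inv]
        ring
      rw [h3] at h2
      rw [hxeq]
      nlinarith [hxnn, hl3]
    have hBB : L ≤ 2 * lg := by
      have h1 : Real.log (1/u) ≤ lg := Real.log_le_log (by positivity) (by linarith)
      have h2 : (1:ℝ) ≤ lg := by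
        have : Real.log 3 ≤ lg := Real.log_le_log (by norm_num) (by linarith)
        linarith
      rw [hxeq]
      linarith
    -- ratio bound
    have hratio : lg ^ γ * L ^ (-γ) ≤ c₃ := by
      have hLL : L ^ γ * L ^ (-γ) = 1 := by
        rw [← Real.rpow_add hLp, add_neg_cancel, Real.rpow_zero]
      have hLγn : (0:ℝ) ≤ L ^ (-γ) := Real.rpow_nonneg hLp.le _
      rcases le_or_gt 0 γ with hg | hg
      · have h1 : lg ^ γ ≤ (Real.log 3 * L) ^ γ := Real.rpow_le_rpow hlgp.le hA hg
        rw [Real.mul_rpow (by linarith) hLp.le] at h1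
        calc lg ^ γ * L ^ (-γ) ≤ Real.log 3 ^ γ * L ^ γ * L ^ (-γ) :=
              mul_le_mul_of_nonneg_right h1 hLγn
          _ = Real.log 3 ^ γ * (L ^ γ * L ^ (-γ)) := by ring
          _ = Real.log 3 ^ γ := by rw [hLL, mul_one]
          _ ≤ c₃ := le_max_left _ _
      · have hhalfL : L / 2 ≤ lg := by linarith
        have h1 : lg ^ γ ≤ (L/2) ^ γ :=
          Real.rpow_le_rpow_of_nonpos (by linarith) hhalfL hg.le
        rw [Real.div_rpow hLp.le (by norm_num)] at h1
        calc lg ^ γ * L ^ (-γ) ≤ L ^ γ / (2:ℝ) ^ γ * L ^ (-γ) :=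
              mul_le_mul_of_nonneg_right h1 hLγn
          _ = (L ^ γ * L ^ (-γ)) * ((2:ℝ) ^ γ)⁻¹ := by ring
          _ = ((2:ℝ) ^ γ)⁻¹ := by rw [hLL, one_mul]
          _ = (2:ℝ) ^ (-γ) := (Real.rpow_neg (by norm_num) γ).symm
          _ ≤ c₃ := le_max_right _ _
    -- lower bound for the integral
    set mt : ℝ := (μ (Ico t 1)).toReal with hmt
    have hmtne : μ (Ico t 1) ≠ ⊤ :=
      ne_of_lt (lt_of_le_of_lt (measure_mono (Ico_subset_Ico_left ht0)) hfin)
    have hlow : (t ^ n * L ^ (β+1)) * mt ≤ ∫ x in Ico t 1, x ^ n * hilbL x ^ (β+1) ∂μ := by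
      refine le_of_eq_of_le ?_ (setIntegral_ge_of_const_le (c := t ^ n * L ^ (β+1)) measurableSet_Ico hmtne ?_ ?_)
      · rw [smul_eq_mul, hmt, Measure.real]; ring
      · rintro x ⟨hx1, hx2⟩
        have hx0 : (0:ℝ) ≤ x := le_trans ht0 hx1
        have h1 : t ^ n ≤ x ^ n := pow_le_pow_left₀ ht0 hx1 n
        have h2 : L ^ (β+1) ≤ hilbL x ^ (β+1) :=
          Real.rpow_le_rpow hLp.le (hilbL_mono ht0 hx1 hx2) (by linarith)
        apply mul_le_mul h1 h2 (Real.rpow_nonneg hLp.le _) (pow_nonneg hx0 n)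
      · have hio : IntegrableOn (fun x => x ^ n * hilbL x ^ (β+1)) (Ico 0 1) μ := hφint n
        exact hio.mono_set (Ico_subset_Ico_left ht0)
    have hglobal : ∫ x in Ico t 1, x ^ n * hilbL x ^ (β+1) ∂μ
        ≤ ∫ x in Ico (0:ℝ) 1, x ^ n * hilbL x ^ (β+1) ∂μ := by
      apply setIntegral_mono_set (hφint n)
      · filter_upwards [self_mem_ae_restrict (measurableSet_Ico : MeasurableSet (Ico (0:ℝ) 1))]
          with x hx
        have := hilbL_pos hx.1 hx.2
        have := Real.rpow_nonneg this.le (β+1)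
        have := hx.1
        positivity
      · exact HasSubset.Subset.eventuallyLE (Ico_subset_Ico_left ht0)
    -- upper bound for the integral from hM
    have hup : ∫ x in Ico (0:ℝ) 1, x ^ n * hilbL x ^ (β+1) ∂μ
        ≤ M * lg ^ γ / (n:ℝ) ^ (α+1) := by
      have h0 := hM n hn1
      have hP : (0:ℝ) < (n:ℝ) ^ (α+1) := Real.rpow_pos_of_pos hnp _
      have hG : (0:ℝ) < lg ^ γ := Real.rpow_pos_of_pos hlgp _
      have e2 : lg ^ (-γ) = (lg ^ γ)⁻¹ := Real.rpow_neg hlgp.le γ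
      rw [e2] at h0
      set J : ℝ := ∫ x in Ico (0:ℝ) 1, x ^ n * hilbL x ^ (β+1) ∂μ with hJ
      have key : J = (lg ^ γ / (n:ℝ) ^ (α+1)) * ((n:ℝ) ^ (α+1) * (lg ^ γ)⁻¹ * J) := by
        field_simp
      rw [key]
      calc (lg ^ γ / (n:ℝ) ^ (α+1)) * ((n:ℝ) ^ (α+1) * (lg ^ γ)⁻¹ * J)
          ≤ (lg ^ γ / (n:ℝ) ^ (α+1)) * M := by
            apply mul_le_mul_of_nonneg_left h0 (by positivity)
        _ = M * lg ^ γ / (n:ℝ) ^ (α+1) := by ring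
    -- combine
    have hW : (t ^ n * L ^ (β+1)) * mt ≤ M * lg ^ γ / (n:ℝ) ^ (α+1) :=
      le_trans hlow (le_trans hglobal hup)
    have hmtnn : 0 ≤ mt := ENNReal.toReal_nonneg
    have htnp : (0:ℝ) < t ^ n := pow_pos (by linarith) n
    have hLb : (0:ℝ) < L ^ (β+1) := Real.rpow_pos_of_pos hLp _
    have hLsplit : L ^ (β+1-γ) = L ^ (β+1) * L ^ (-γ) := by
      rw [← Real.rpow_add hLp]
      ring_nf
    have hninv : ((n:ℝ) ^ (α+1))⁻¹ ≤ u ^ (α+1) := by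
      have h2 : ((1:ℝ)/u) ^ (α+1) = (u ^ (α+1))⁻¹ := by
        rw [one_div, Real.inv_rpow hu.le]
      have h1 : (u ^ (α+1))⁻¹ ≤ (n:ℝ) ^ (α+1) := by
        rw [← h2]
        exact Real.rpow_le_rpow (by positivity) hnlow (by linarith)
      have h3 := inv_anti₀ (by rw [← h2]; positivity) h1
      rwa [inv_inv] at h3
    -- final combination
    have hWnn : 0 ≤ t ^ n * L ^ (β+1) * mt :=
      mul_nonneg (mul_nonneg htnp.le hLb.le) hmtnn
    have hRnn : 0 ≤ M * lg ^ γ / (n:ℝ) ^ (α+1) := le_trans hWnn hW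
    have hP : (0:ℝ) < (n:ℝ) ^ (α+1) := Real.rpow_pos_of_pos hnp _
    have hG : (0:ℝ) < lg ^ γ := Real.rpow_pos_of_pos hlgp _
    have hMnn : 0 ≤ M := by
      by_contra hMneg
      push_neg at hMneg
      have h1 : M * lg ^ γ < 0 := mul_neg_of_neg_of_pos hMneg hG
      have h2 : M * lg ^ γ / (n:ℝ) ^ (α+1) < 0 := div_neg_of_neg_of_pos h1 hP
      linarith
    have hinvtn : (t ^ n)⁻¹ ≤ Real.exp 4 := by
      have h1 := inv_anti₀ (Real.exp_pos (-4)) htn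
      rwa [← Real.exp_neg, neg_neg] at h1
    have s1 : mt * L ^ (β+1) ≤ Real.exp 4 * (M * lg ^ γ / (n:ℝ) ^ (α+1)) := by
      have e1 : mt * L ^ (β+1) = (t ^ n * L ^ (β+1) * mt) * (t ^ n)⁻¹ := by
        field_simp
      rw [e1]
      calc (t ^ n * L ^ (β+1) * mt) * (t ^ n)⁻¹
          ≤ (M * lg ^ γ / (n:ℝ) ^ (α+1)) * Real.exp 4 :=
            mul_le_mul hW hinvtn (inv_nonneg.2 htnp.le) hRnn
        _ = Real.exp 4 * (M * lg ^ γ / (n:ℝ) ^ (α+1)) := by ring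
    have hLγn : (0:ℝ) ≤ L ^ (-γ) := Real.rpow_nonneg hLp.le _
    calc mt * L ^ (β+1-γ) = (mt * L ^ (β+1)) * L ^ (-γ) := by rw [hLsplit]; ring
      _ ≤ (Real.exp 4 * (M * lg ^ γ / (n:ℝ) ^ (α+1))) * L ^ (-γ) :=
          mul_le_mul_of_nonneg_right s1 hLγn
      _ = (Real.exp 4 * M) * (lg ^ γ * L ^ (-γ)) * ((n:ℝ) ^ (α+1))⁻¹ := by ring
      _ ≤ (Real.exp 4 * M) * c₃ * ((n:ℝ) ^ (α+1))⁻¹ := by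
          apply mul_le_mul_of_nonneg_right _ (inv_nonneg.2 hP.le)
          exact mul_le_mul_of_nonneg_left hratio (by positivity)
      _ ≤ (Real.exp 4 * M) * c₃ * u ^ (α+1) := by
          apply mul_le_mul_of_nonneg_left hninv
          positivity
      _ ≤ C * u ^ (α+1) := by
          apply mul_le_mul_of_nonneg_right _ hu1
          have e2 : Real.exp 4 * M * c₃ = C₂ := by rw [hC₂]; ring
          rw [e2, hC]
          have := le_max_left C₂ (0:ℝ)
          linarith

theorem stmt19 (μ : Measure ℝ) (α β γ : ℝ) (hα : -1 < α) (hβ : -1 < β)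
    (hμ : Integrable (fun t => Real.log (Real.exp 1 / (1 - t)) ^ β / (1 - t))
      (μ.restrict (Ico 0 1))) :
    (∃ C > 0, ∀ t ∈ Ico (0:ℝ) 1,
        (μ (Ico t 1)).toReal * Real.log (Real.exp 1 / (1 - t)) ^ (β + 1 - γ) ≤
          C * (1 - t) ^ (α + 1))
    ↔ (∃ M : ℝ, ∀ n : ℕ, 1 ≤ n →
        (n : ℝ) ^ (α + 1) * Real.log ((n : ℝ) + 1) ^ (-γ) *
          ∫ t in Ico (0:ℝ) 1, t ^ n * Real.log (Real.exp 1 / (1 - t)) ^ (β + 1) ∂μ ≤ M) := by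
  have hμ' : Integrable (fun t => hilbL t ^ β / (1 - t)) (μ.restrict (Ico 0 1)) := hμ
  have hfin : μ (Ico (0:ℝ) 1) < ⊤ := hilb_finite μ β hβ hμ'
  have hφint : ∀ n : ℕ, Integrable (fun t => t ^ n * hilbL t ^ (β+1)) (μ.restrict (Ico 0 1)) :=
    fun n => hilb_phi_integrable μ β hβ hμ' n
  constructor
  · rintro ⟨C, hC, hcar⟩
    obtain ⟨M, hMn⟩ := hilb_forward μ α β γ C hα hβ hC hfin hφint hcar
    exact ⟨M, hMn⟩
  · rintro ⟨M, hM⟩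
    exact hilb_backward μ α β γ hα hβ hfin hφint M hM
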